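/- Harnack's inequality for balls in the plane: Let Ω ⊆ ℝ² be open and let h : Ω → ℝ be a positive harmonic function on Ω. Then for every open ball B(p,r) with B(p,r) ⊆ Ω and every q ∈ B(p,r), one has h(q) ≤ ( r / (r − ‖p − q‖) )² · h(p). -/

import Mathlib

/-- The Laplacian `Σᵢ ∂²h/∂xᵢ²` of a function on `ℝⁿ` (as `EuclideanSpace ℝ (Fin n)`). -/
noncomputable def laplacian {n : ℕ} (h : EuclideanSpace ℝ (Fin n) → ℝ)
    (x : EuclideanSpace ℝ (Fin n)) : ℝ :=
  ∑ i : Fin n,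
    fderiv ℝ (fun y => fderiv ℝ h y (EuclideanSpace.single i (1 : ℝ))) x
      (EuclideanSpace.single i (1 : ℝ))

/-- `h` is harmonic on the open set `Ω`: twice continuously differentiable with
identically vanishing Laplacian on `Ω`. -/
def HarmonicOn {n : ℕ} (h : EuclideanSpace ℝ (Fin n) → ℝ)
    (Ω : Set (EuclideanSpace ℝ (Fin n))) : Prop :=
  ContDiffOn ℝ 2 h Ω ∧ ∀ x ∈ Ω, laplacian h x = 0

open Complex Metric Real intervalIntegral MeasureTheory


/-- Apply a real-CLM from ℂ via the basis 1, I. -/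
lemma clm_complex_apply {M : Type*} [NormedAddCommGroup M] [NormedSpace ℝ M]
    (L : ℂ →L[ℝ] M) (z : ℂ) : L z = z.re • L 1 + z.im • L I := by
  have hz : z = z.re • (1 : ℂ) + z.im • I := by
    simp [Complex.real_smul, Complex.re_add_im]
  rw [← L.map_smul, ← L.map_smul, ← L.map_add, ← hz]

/-- If `f : ℂ → ℂ` has a real derivative `L` at `z` satisfying the Cauchy–Riemann
relation `L I = I * L 1`, then `f` is complex differentiable at `z`. -/
lemma differentiableAt_of_CR {f : ℂ → ℂ} {z : ℂ} {L : ℂ →L[ℝ] ℂ}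
    (hL : HasFDerivAt f L z) (hCR : L I = I * L 1) :
    DifferentiableAt ℂ f z := by
  set L' : ℂ →L[ℂ] ℂ := (ContinuousLinearMap.id ℂ ℂ).smulRight (L 1) with hL'
  have hres : L'.restrictScalars ℝ = L := by
    ext1 w
    rw [clm_complex_apply (L'.restrictScalars ℝ) w, clm_complex_apply L w]
    simp only [ContinuousLinearMap.coe_restrictScalars', hL',
      ContinuousLinearMap.smulRight_apply, ContinuousLinearMap.id_apply, hCR]
    simp [smul_eq_mul]
  exact (hasFDerivAt_of_restrictScalars ℝ hL hres).differentiableAt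

section Holo

variable {H : ℂ → ℝ} {U : Set ℂ}

/-- The "conjugate gradient" `H_x - i H_y` of a harmonic function is holomorphic. -/
lemma conj_grad_differentiable (hU : IsOpen U) (hC2 : ContDiffOn ℝ 2 H U)
    (hlap : ∀ z ∈ U, fderiv ℝ (fun y => fderiv ℝ H y 1) z 1
      + fderiv ℝ (fun y => fderiv ℝ H y I) z I = 0)
    {z : ℂ} (hz : z ∈ U) :
    DifferentiableAt ℂ (fun w => (fderiv ℝ H w 1 : ℂ) - (fderiv ℝ H w I : ℂ) * I) z := by
  have hCA : ContDiffAt ℝ 2 H z := hC2.contDiffAt (hU.mem_nhds hz)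
  have hg : ContDiffAt ℝ 1 (fderiv ℝ H) z := hCA.fderiv_right (le_refl 2)
  have hgd : DifferentiableAt ℝ (fderiv ℝ H) z := hg.differentiableAt (by norm_num)
  set A := fderiv ℝ (fderiv ℝ H) z with hA
  have hsymm : ∀ v w : ℂ, A v w = A w v := (hCA.isSymmSndFDerivAt (by norm_num)).eq
  -- derivative of w ↦ fderiv H w v
  have happ : ∀ v : ℂ, HasFDerivAt (fun w => fderiv ℝ H w v)
      ((ContinuousLinearMap.apply ℝ ℝ v).comp A) z := fun v =>
    (ContinuousLinearMap.apply ℝ ℝ v).hasFDerivAt.comp z hgd.hasFDerivAt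
  -- the real derivative of f
  have hf : HasFDerivAt (fun w => (fderiv ℝ H w 1 : ℂ) - (fderiv ℝ H w I : ℂ) * I)
      ((Complex.ofRealCLM.comp ((ContinuousLinearMap.apply ℝ ℝ 1).comp A))
        - (Complex.ofRealCLM.comp ((ContinuousLinearMap.apply ℝ ℝ I).comp A)).smulRight I) z := by
    have h1 := Complex.ofRealCLM.hasFDerivAt.comp z (happ 1)
    have h2 := (Complex.ofRealCLM.hasFDerivAt.comp z (happ I)).mul_const I
    have := h1.sub h2
    refine this.congr_fderiv ?_
    ext1 w
    simp only [ContinuousLinearMap.smulRight_apply, smul_eq_mul, Function.comp,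
      ContinuousLinearMap.sub_apply, ContinuousLinearMap.comp_apply,
      ContinuousLinearMap.smul_apply, Complex.ofRealCLM_apply,
      ContinuousLinearMap.apply_apply]
    ring
  apply differentiableAt_of_CR hf
  -- Cauchy–Riemann from the Laplace equation and symmetry of 2nd derivatives
  have hl : A 1 1 + A I I = 0 := by
    have e1 : fderiv ℝ (fun y => fderiv ℝ H y 1) z = (ContinuousLinearMap.apply ℝ ℝ 1).comp A :=
      (happ 1).fderiv
    have e2 : fderiv ℝ (fun y => fderiv ℝ H y I) z = (ContinuousLinearMap.apply ℝ ℝ I).comp A :=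
      (happ I).fderiv
    have := hlap z hz
    rwa [e1, e2] at this
  simp only [ContinuousLinearMap.sub_apply, ContinuousLinearMap.comp_apply,
    ContinuousLinearMap.smulRight_apply, Complex.ofRealCLM_apply,
    ContinuousLinearMap.apply_apply, smul_eq_mul]
  have hAI1 : A I 1 = A 1 I := hsymm I 1
  have hAII : A I I = -(A 1 1) := by linarith
  rw [hAI1, hAII]
  have := Complex.I_mul_I
  push_cast
  linear_combination (↑((A 1) I) : ℂ) * this
end Holo


lemma intervalIntegral_im {f : ℝ → ℂ} {a b : ℝ} (hf : IntervalIntegrable f volume a b) :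
    (∫ t in a..b, f t).im = ∫ t in a..b, (f t).im := by
  simp only [intervalIntegral, Complex.sub_im]
  have h1 := integral_im (𝕜 := ℂ) hf.1
  have h2 := integral_im (𝕜 := ℂ) hf.2
  simp only [RCLike.im_eq_complex_im] at h1 h2
  rw [← h1, ← h2]

section MVP

variable {H : ℂ → ℝ} {U : Set ℂ}

lemma circle_mvp (hU : IsOpen U) (hC2 : ContDiffOn ℝ 2 H U)
    (hdiff_f : ∀ z ∈ U, DifferentiableAt ℂ
      (fun w => (fderiv ℝ H w 1 : ℂ) - (fderiv ℝ H w I : ℂ) * I) z)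
    {c : ℂ} {R : ℝ} (hcb : closedBall c R ⊆ U) {s : ℝ} (hs : s ∈ Set.Ioo 0 R) :
    ∫ θ in (-π)..π, H (c + s * exp (θ * I)) = 2 * π * H c := by
  set g := fderiv ℝ H with hg
  have hHc : ContinuousOn H U := hC2.continuousOn
  have hgc : ContinuousOn g U := hC2.continuousOn_fderiv_of_isOpen hU (by norm_num)
  have hHd : ∀ z ∈ U, HasFDerivAt H (g z) z := fun z hz =>
    ((hC2.differentiableOn (by norm_num)).differentiableAt (hU.mem_nhds hz)).hasFDerivAt
  -- membership facts
  have hmem : ∀ (x θ : ℝ), |x| ≤ R → c + x * exp (θ * I) ∈ U := by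
    intro x θ hx
    apply hcb
    simp only [mem_closedBall, Complex.dist_eq, add_sub_cancel_left, map_mul, norm_mul,
      Complex.norm_exp, Complex.norm_real]
    simpa using hx
  -- continuity of the integrand in θ
  have hcont_thet : ∀ x : ℝ, |x| ≤ R → Continuous fun θ : ℝ => H (c + x * exp (θ * I)) := by
    intro x hx
    apply ContinuousOn.comp_continuous hHc
    · exact continuous_const.add (continuous_const.mul
        ((Complex.continuous_ofReal.mul continuous_const).cexp))
    · exact fun θ => hmem x θ hx
  have hcont_g : ∀ x : ℝ, |x| ≤ R →
      Continuous fun θ : ℝ => g (c + x * exp (θ * I)) (exp (θ * I)) := by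
    intro x hx
    have h1 : Continuous fun θ : ℝ => (c + x * exp (θ * I)) :=
      continuous_const.add (continuous_const.mul
        ((Complex.continuous_ofReal.mul continuous_const).cexp))
    have h2 : Continuous fun θ : ℝ => g (c + x * exp (θ * I)) :=
      hgc.comp_continuous h1 (fun θ => hmem x θ hx)
    exact h2.clm_apply ((Complex.continuous_ofReal.mul continuous_const).cexp)
  -- the derivative of x ↦ ∫ H (c + x e^{iθ}) dθ
  obtain ⟨M, hM⟩ : ∃ M, ∀ z ∈ closedBall c R, ‖g z‖ ≤ M :=
    (isCompact_closedBall c R).exists_bound_of_continuousOn (hgc.mono hcb)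
  have hmemB : ∀ (x θ : ℝ), |x| ≤ R → c + x * exp (θ * I) ∈ closedBall c R := by
    intro x θ hx
    simp only [mem_closedBall, Complex.dist_eq, add_sub_cancel_left, map_mul, norm_mul,
      Complex.norm_exp, Complex.norm_real]
    simpa using hx
  have hasD : ∀ x₀ : ℝ, |x₀| < R →
      HasDerivAt (fun x : ℝ => ∫ θ in (-π)..π, H (c + x * exp (θ * I)))
        (∫ θ in (-π)..π, g (c + x₀ * exp (θ * I)) (exp (θ * I))) x₀ := by
    intro x₀ hx₀
    set ε := (R - |x₀|) / 2 with hε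
    have hεpos : 0 < ε := by simp [hε]; linarith
    have hball : ∀ x ∈ ball x₀ ε, |x| ≤ R := by
      intro x hx
      rw [mem_ball, Real.dist_eq] at hx
      cases abs_cases (x - x₀) <;> cases abs_cases x₀ <;> cases abs_cases x <;> linarith
    have key := intervalIntegral.hasDerivAt_integral_of_dominated_loc_of_deriv_le
      (F := fun (x : ℝ) (θ : ℝ) => H (c + x * exp (θ * I)))
      (F' := fun (x : ℝ) (θ : ℝ) => g (c + x * exp (θ * I)) (exp (θ * I)))
      (a := -π) (b := π) (μ := volume) (bound := fun _ => M) (x₀ := x₀)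
      (Metric.ball_mem_nhds x₀ hεpos)
      (Filter.eventually_of_mem (Metric.ball_mem_nhds x₀ hεpos)
        (fun x hx => (hcont_thet x (hball x hx)).aestronglyMeasurable))
      ((hcont_thet x₀ hx₀.le).intervalIntegrable _ _)
      ((hcont_g x₀ hx₀.le).aestronglyMeasurable)
      (Filter.Eventually.of_forall fun θ _ x hx => by
        calc ‖g (c + x * exp (θ * I)) (exp (θ * I))‖
            ≤ ‖g (c + x * exp (θ * I))‖ * ‖exp ((θ : ℂ) * I)‖ :=
              ContinuousLinearMap.le_opNorm _ _
          _ ≤ M * 1 := by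
              apply mul_le_mul (hM _ (hmemB x θ (hball x hx))) ?_ (norm_nonneg _)
                ((norm_nonneg _).trans (hM _ (hmemB x₀ 0 hx₀.le)))
              rw [Complex.norm_exp]
              simp
          _ = M := mul_one M)
      (intervalIntegrable_const)
      (Filter.Eventually.of_forall fun θ _ x hx => by
        have hz : c + x * exp (θ * I) ∈ U := hmem x θ (hball x hx)
        have haff : HasDerivAt (fun y : ℝ => c + y * exp (θ * I)) (exp (θ * I)) x := by
          simpa using ((Complex.ofRealCLM.hasDerivAt (x := x)).mul_const (exp ((θ:ℂ) * I))).const_add c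
        exact (hHd _ hz).comp_hasDerivAt x haff)
    exact key.2
  -- f is continuous on U
  set f : ℂ → ℂ := fun w => (g w 1 : ℂ) - (g w I : ℂ) * I with hf
  have hfc : ContinuousOn f U := by
    apply ContinuousOn.sub
    · exact Complex.continuous_ofReal.comp_continuousOn (hgc.clm_apply continuousOn_const)
    · exact (Complex.continuous_ofReal.comp_continuousOn
        (hgc.clm_apply continuousOn_const)).mul continuousOn_const
  -- the derivative vanishes on [0, s)
  have hderiv0 : ∀ x₀ ∈ Set.Ico (0:ℝ) s,
      HasDerivAt (fun x : ℝ => ∫ θ in (-π)..π, H (c + x * exp (θ * I))) 0 x₀ := by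
    intro x₀ hx₀
    obtain ⟨hx₀0, hx₀s⟩ := hx₀
    have habs : |x₀| < R := by rw [_root_.abs_of_nonneg hx₀0]; linarith [hs.2]
    have hD := hasD x₀ habs
    rcases eq_or_lt_of_le hx₀0 with heq | hpos
    · -- x₀ = 0 : direct computation
      subst heq
      convert hD using 1
      symm
      have heq : ∀ θ : ℝ, g (c + (0:ℝ) * exp (θ * I)) (exp (θ * I))
          = Real.cos θ * (g c 1) + Real.sin θ * (g c I) := by
        intro θ
        rw [show c + (0:ℝ) * exp (θ * I) = c by push_cast; ring]
        rw [clm_complex_apply (g c) (exp (θ * I))]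
        simp [Complex.exp_ofReal_mul_I_re, Complex.exp_ofReal_mul_I_im, smul_eq_mul]
      rw [intervalIntegral.integral_congr (fun θ _ => heq θ)]
      rw [intervalIntegral.integral_add (f := fun x => Real.cos x * g c 1) (g := fun x => Real.sin x * g c I)
        ((Real.continuous_cos.mul continuous_const).intervalIntegrable _ _)
        ((Real.continuous_sin.mul continuous_const).intervalIntegrable _ _),
        intervalIntegral.integral_mul_const, intervalIntegral.integral_mul_const,
        integral_cos, integral_sin]
      simp
    · -- x₀ > 0 : Cauchy's theorem
      have hzero : (∮ z in C(c, x₀), f z) = 0 := by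
        apply circleIntegral_eq_zero_of_differentiable_on_off_countable hx₀0
          Set.countable_empty
        · apply hfc.mono
          intro z hz
          apply hcb
          exact closedBall_subset_closedBall (show x₀ ≤ R by linarith [hs.2]) hz
        · intro z hz
          apply hdiff_f
          apply hcb
          exact (ball_subset_closedBall.trans (closedBall_subset_closedBall (show x₀ ≤ R by linarith [hs.2]))) hz.1
      have hint : ∫ θ in (-π)..π, g (c + x₀ * exp (θ * I)) (exp (θ * I)) = 0 := by
        -- integrand of the circle integral, shifted to [-π, π]
        set φ : ℝ → ℂ := fun θ => deriv (circleMap c x₀) θ • f (circleMap c x₀ θ) with hφ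
        have hφper : Function.Periodic φ (2 * π) := by
          intro θ
          simp only [hφ, deriv_circleMap]
          rw [periodic_circleMap c x₀ θ, periodic_circleMap 0 x₀ θ]
        have hφshift : ∫ θ in (0:ℝ)..2 * π, φ θ = ∫ θ in (-π)..π, φ θ := by
          have h := hφper.intervalIntegral_add_eq 0 (-π)
          rw [zero_add] at h
          rw [h]
          ring_nf
        have hφcont : Continuous φ := by
          apply Continuous.fun_smul
          · have : Continuous fun θ => circleMap 0 x₀ θ * I :=
              (continuous_circleMap 0 x₀).mul continuous_const
            exact this.congr fun θ => (deriv_circleMap c x₀ θ).symm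
          · apply hfc.comp_continuous (continuous_circleMap c x₀)
            intro θ
            apply hcb
            have : dist (circleMap c x₀ θ) c = |x₀| := by
              simp [circleMap, Complex.dist_eq, map_mul, Complex.norm_exp]
            simp only [mem_closedBall, this]
            rw [_root_.abs_of_nonneg hx₀0]; linarith [hs.2]
        have him : ∀ θ : ℝ, (φ θ).im = x₀ * g (c + x₀ * exp (θ * I)) (exp (θ * I)) := by
          intro θ
          have hcm : circleMap c x₀ θ = c + x₀ * exp (θ * I) := rfl
          simp only [hφ, deriv_circleMap, hcm, smul_eq_mul, hf]
          rw [clm_complex_apply (g (c + x₀ * exp (θ * I))) (exp (θ * I))]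
          have hcm0 : circleMap 0 x₀ θ = x₀ * exp (θ * I) := by simp [circleMap]
          rw [hcm0]
          simp [Complex.mul_im, Complex.mul_re, Complex.exp_ofReal_mul_I_re,
            Complex.exp_ofReal_mul_I_im, smul_eq_mul]
          ring
        have h1 : (∫ θ in (-π)..π, φ θ).im = 0 := by
          rw [← hφshift]
          rw [show (∫ θ in (0:ℝ)..2*π, φ θ) = ∮ z in C(c, x₀), f z from rfl, hzero]
          rfl
        rw [_root_.intervalIntegral_im (hφcont.intervalIntegrable _ _)] at h1
        rw [intervalIntegral.integral_congr (fun θ _ => him θ)] at h1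
        rw [intervalIntegral.integral_const_mul] at h1
        rcases mul_eq_zero.1 h1 with h | h
        · exact absurd h (ne_of_gt hpos)
        · exact h
      rw [← hint]
      exact hD
  -- conclude by constancy
  have hconst := constant_of_has_deriv_right_zero
    (f := fun x : ℝ => ∫ θ in (-π)..π, H (c + x * exp (θ * I)))
    (a := 0) (b := s)
    (fun x hx => by
      have : |x| < R := by
        rw [_root_.abs_of_nonneg hx.1]; exact lt_of_le_of_lt hx.2 hs.2
      exact ((hasD x this).continuousAt).continuousWithinAt)
    (fun x hx => ((hderiv0 x hx).hasDerivWithinAt).mono (by intro y hy; exact hy))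
    s (Set.right_mem_Icc.2 hs.1.le)
  have := hconst
  rw [this]
  norm_num [intervalIntegral.integral_const, two_mul]

lemma area_mvp (hU : IsOpen U) (hC2 : ContDiffOn ℝ 2 H U)
    (hdiff_f : ∀ z ∈ U, DifferentiableAt ℂ
      (fun w => (fderiv ℝ H w 1 : ℂ) - (fderiv ℝ H w I : ℂ) * I) z)
    {c : ℂ} {ρ : ℝ} (hρ : 0 < ρ) (hcb : closedBall c ρ ⊆ U) :
    ∫ z in ball c ρ, H z = (π * ρ ^ 2) * H c := by
  have hHc : ContinuousOn H U := hC2.continuousOn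
  -- change variables to polar coordinates
  have key := Complex.integral_comp_polarCoord_symm
    ((ball (0:ℂ) ρ).indicator (fun z => H (c + z)))
  -- right-hand side is the integral over the ball
  have hind : ∀ z : ℂ, (ball (0:ℂ) ρ).indicator (fun z => H (c + z)) z
      = (ball c ρ).indicator H (c + z) := by
    intro z
    by_cases hz : z ∈ ball (0:ℂ) ρ
    · rw [Set.indicator_of_mem hz, Set.indicator_of_mem (by
        simpa [mem_ball, Complex.dist_eq] using hz)]
    · rw [Set.indicator_of_notMem hz, Set.indicator_of_notMem (by
        simpa [mem_ball, Complex.dist_eq] using hz)]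
  have hRHS : ∫ z : ℂ, (ball (0:ℂ) ρ).indicator (fun z => H (c + z)) z
      = ∫ z in ball c ρ, H z := by
    calc ∫ z : ℂ, (ball (0:ℂ) ρ).indicator (fun z => H (c + z)) z
        = ∫ z : ℂ, (ball c ρ).indicator H (c + z) := by
          congr 1; funext z; exact hind z
      _ = ∫ z : ℂ, (ball c ρ).indicator H z :=
          MeasureTheory.integral_add_left_eq_self ((ball c ρ).indicator H) c
      _ = ∫ z in ball c ρ, H z := MeasureTheory.integral_indicator measurableSet_ball
  rw [hRHS] at key
  rw [← key]
  -- now compute the polar-coordinate integral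
  set G : ℝ × ℝ → ℝ := fun p => p.1 * H (c + p.1 * exp (p.2 * I)) with hG
  set S : Set (ℝ × ℝ) := Set.Ioo 0 ρ ×ˢ Set.Ioo (-π) π with hS
  have hsymm_eq : ∀ p : ℝ × ℝ, Complex.polarCoord.symm p = p.1 * exp (p.2 * I) := by
    intro p
    rw [Complex.polarCoord_symm_apply]
    rw [Complex.exp_mul_I]
    push_cast
    simp
  have hmemball : ∀ p : ℝ × ℝ, Complex.polarCoord.symm p ∈ ball (0:ℂ) ρ ↔ |p.1| < ρ := by
    intro p
    rw [mem_ball, Complex.dist_eq, sub_zero, hsymm_eq]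
    rw [norm_mul]
    simp [Complex.norm_exp, Complex.norm_real]
  have hstep : ∀ p ∈ polarCoord.target,
      p.1 • (ball (0:ℂ) ρ).indicator (fun z => H (c + z)) (Complex.polarCoord.symm p)
        = S.indicator G p := by
    intro p hp
    have hp1 : 0 < p.1 := hp.1
    have hp2 : p.2 ∈ Set.Ioo (-π) π := hp.2
    by_cases hlt : p.1 < ρ
    · rw [Set.indicator_of_mem (hmemball p |>.2 (by rwa [_root_.abs_of_pos hp1])),
        Set.indicator_of_mem (by exact ⟨⟨hp1, hlt⟩, hp2⟩)]
      rw [hsymm_eq]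
      simp [hG, smul_eq_mul]
    · rw [Set.indicator_of_notMem (fun hm => hlt (lt_of_le_of_lt (le_abs_self p.1) ((hmemball p).1 hm))),
        Set.indicator_of_notMem (fun hm => hlt hm.1.2)]
      simp
  rw [MeasureTheory.setIntegral_congr_fun (polarCoord.open_target.measurableSet) hstep]
  have hST : S ⊆ polarCoord.target := by
    intro p hp
    exact ⟨hp.1.1, hp.2⟩
  rw [MeasureTheory.setIntegral_indicator (by
    exact measurableSet_Ioo.prod measurableSet_Ioo)]
  have hTS : polarCoord.target ∩ S = S := Set.inter_eq_self_of_subset_right hST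
  rw [hTS]
  -- integrability of G on S
  have hK : IsCompact (Set.Icc (0:ℝ) ρ ×ˢ Set.Icc (-π) π) :=
    isCompact_Icc.prod isCompact_Icc
  have hmapsK : ∀ p : ℝ × ℝ, p ∈ Set.Icc (0:ℝ) ρ ×ˢ Set.Icc (-π) π →
      c + p.1 * exp (p.2 * I) ∈ U := by
    intro p hp
    apply hcb
    simp only [mem_closedBall, Complex.dist_eq, add_sub_cancel_left, map_mul, norm_mul,
      Complex.norm_exp, Complex.norm_real]
    simpa using abs_le.2 ⟨by linarith [hp.1.1], hp.1.2⟩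
  have hcontm : Continuous fun p : ℝ × ℝ => c + (p.1 : ℂ) * exp (p.2 * I) := by
    apply continuous_const.add
    exact (Complex.continuous_ofReal.comp continuous_fst).mul
      ((Complex.continuous_ofReal.comp continuous_snd).mul continuous_const).cexp
  have hGcont : ContinuousOn G (Set.Icc (0:ℝ) ρ ×ˢ Set.Icc (-π) π) := by
    apply ContinuousOn.mul continuous_fst.continuousOn
    exact hHc.comp hcontm.continuousOn hmapsK
  have hGint : MeasureTheory.IntegrableOn G S := by
    apply (hGcont.integrableOn_compact hK).mono_set
    intro p hp
    exact ⟨⟨hp.1.1.le, hp.1.2.le⟩, ⟨hp.2.1.le, hp.2.2.le⟩⟩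
  -- Fubini
  rw [hS, MeasureTheory.Measure.volume_eq_prod] at hGint ⊢
  rw [MeasureTheory.setIntegral_prod _ hGint]
  have hinner : ∀ x ∈ Set.Ioo (0:ℝ) ρ,
      ∫ y in Set.Ioo (-π) π, G (x, y) = (2 * π * H c) * x := by
    intro x hx
    have : ∫ y in Set.Ioo (-π) π, G (x, y) = x * ∫ y in Set.Ioo (-π) π, H (c + x * exp (y * I)) := by
      simp only [hG]
      rw [MeasureTheory.integral_const_mul]
    rw [this, ← MeasureTheory.integral_Ioc_eq_integral_Ioo,
      ← intervalIntegral.integral_of_le (by linarith [Real.pi_pos] : -π ≤ π)]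
    rw [circle_mvp hU hC2 hdiff_f hcb hx]
    ring
  rw [MeasureTheory.setIntegral_congr_fun measurableSet_Ioo hinner]
  rw [MeasureTheory.integral_const_mul, ← MeasureTheory.integral_Ioc_eq_integral_Ioo,
    ← intervalIntegral.integral_of_le hρ.le, integral_id]
  ring

lemma harnack_complex (hU : IsOpen U) (hC2 : ContDiffOn ℝ 2 H U)
    (hdiff_f : ∀ z ∈ U, DifferentiableAt ℂ
      (fun w => (fderiv ℝ H w 1 : ℂ) - (fderiv ℝ H w I : ℂ) * I) z)
    (hpos : ∀ z ∈ U, 0 < H z)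
    {c : ℂ} {r : ℝ} (hball : ball c r ⊆ U) {w : ℂ} (hw : w ∈ ball c r) :
    H w * (r - dist c w) ^ 2 ≤ H c * r ^ 2 := by
  have hHc : ContinuousOn H U := hC2.continuousOn
  set d := dist c w with hd
  have hd0 : 0 ≤ d := dist_nonneg
  have hdr : d < r := by rw [hd, dist_comm]; exact mem_ball.1 hw
  have hr0 : 0 < r := lt_of_le_of_lt hd0 hdr
  -- main estimate for every radius below r - d
  have main : ∀ ρ' ∈ Set.Ioo (0:ℝ) (r - d), H w * ρ' ^ 2 ≤ H c * r ^ 2 := by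
    intro ρ' hρ'
    set r' := (r + (d + ρ')) / 2 with hr'
    have hr'1 : d + ρ' < r' := by rw [hr']; linarith [hρ'.2]
    have hr'2 : r' < r := by rw [hr']; linarith [hρ'.2]
    have hr'0 : 0 < r' := by linarith [hρ'.1]
    have hsub1 : closedBall w ρ' ⊆ ball c r := by
      intro z hz
      rw [mem_ball]
      calc dist z c ≤ dist z w + dist w c := dist_triangle z w c
        _ ≤ ρ' + d := add_le_add (mem_closedBall.1 hz) (by rw [dist_comm])
        _ < r := by linarith [hρ'.2]
    have hsub2 : closedBall c r' ⊆ ball c r := closedBall_subset_ball hr'2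
    have hmvp1 := area_mvp hU hC2 hdiff_f hρ'.1 (hsub1.trans hball)
    have hmvp2 := area_mvp hU hC2 hdiff_f hr'0 (hsub2.trans hball)
    have hsub3 : ball w ρ' ⊆ ball c r' := by
      intro z hz
      rw [mem_ball]
      calc dist z c ≤ dist z w + dist w c := dist_triangle z w c
        _ < ρ' + d := by
            apply add_lt_add_of_lt_of_le (mem_ball.1 hz)
            rw [dist_comm]
        _ ≤ r' := by linarith
    have hint2 : MeasureTheory.IntegrableOn H (ball c r') := by
      apply MeasureTheory.IntegrableOn.mono_set _ ball_subset_closedBall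
      exact (hHc.mono (hsub2.trans hball)).integrableOn_compact (isCompact_closedBall c r')
    have hmono : ∫ z in ball w ρ', H z ≤ ∫ z in ball c r', H z := by
      apply MeasureTheory.setIntegral_mono_set hint2
      · filter_upwards [MeasureTheory.ae_restrict_mem measurableSet_ball] with z hz
        exact (hpos z (hball (hsub2 (ball_subset_closedBall hz)))).le
      · exact Filter.Eventually.of_forall fun z hz => hsub3 hz
    rw [hmvp1, hmvp2] at hmono
    have hπ : (0:ℝ) < π := Real.pi_pos
    have h1 : H w * ρ' ^ 2 ≤ H c * r' ^ 2 := by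
      have := le_of_mul_le_mul_left (by linarith : π * (ρ' ^ 2 * H w) ≤ π * (r' ^ 2 * H c)) hπ
      linarith
    have h2 : H c * r' ^ 2 ≤ H c * r ^ 2 := by
      apply mul_le_mul_of_nonneg_left _ (hpos c (hball (mem_ball_self hr0))).le
      apply pow_le_pow_left₀ hr'0.le hr'2.le
    linarith
  -- pass to the limit ρ' → r - d
  have hrd : 0 < r - d := by linarith
  have htend : Filter.Tendsto (fun ρ' : ℝ => H w * ρ' ^ 2) (nhdsWithin (r - d) (Set.Iio (r - d)))
      (nhds (H w * (r - d) ^ 2)) := by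
    apply Filter.Tendsto.mono_left _ nhdsWithin_le_nhds
    exact (continuous_const.mul (continuous_pow 2)).tendsto _
  apply le_of_tendsto htend
  filter_upwards [Ioo_mem_nhdsLT_of_mem (Set.right_mem_Ioc.2 hrd)] with ρ' hρ'
  exact main ρ' hρ'

end MVP

/-- (Harnack's inequality for balls in the plane.) Let
`Ω ⊆ ℝ²` be open and `h` a positive harmonic function on `Ω`. Then for every open
ball `B(p,r) ⊆ Ω` and every `q ∈ B(p,r)`,
`h(q) ≤ (r/(r − ‖p − q‖))² · h(p)`. -/
theorem harnack_inequality_for_balls (Ω : Set (EuclideanSpace ℝ (Fin 2)))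
    (hΩ : IsOpen Ω) (h : EuclideanSpace ℝ (Fin 2) → ℝ)
    (hharm : HarmonicOn h Ω) (hpos : ∀ x ∈ Ω, 0 < h x)
    (p : EuclideanSpace ℝ (Fin 2)) (r : ℝ) (hball : Metric.ball p r ⊆ Ω)
    (q : EuclideanSpace ℝ (Fin 2)) (hq : q ∈ Metric.ball p r) :
    h q ≤ (r / (r - ‖p - q‖)) ^ 2 * h p := by
  obtain ⟨hC2h, hlaph⟩ := hharm
  set e : ℂ ≃ₗᵢ[ℝ] EuclideanSpace ℝ (Fin 2) := Complex.orthonormalBasisOneI.repr with he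
  have he1 : e 1 = EuclideanSpace.single 0 (1:ℝ) := by
    have := Complex.orthonormalBasisOneI.repr_self 0
    simpa [Complex.coe_orthonormalBasisOneI] using this
  have heI : e I = EuclideanSpace.single 1 (1:ℝ) := by
    have := Complex.orthonormalBasisOneI.repr_self 1
    simpa [Complex.coe_orthonormalBasisOneI] using this
  set U : Set ℂ := e ⁻¹' Ω with hUdef
  have hUopen : IsOpen U := hΩ.preimage e.continuous
  set H : ℂ → ℝ := fun z => h (e z) with hH
  have hC2 : ContDiffOn ℝ 2 H U := by
    apply hC2h.comp (e.contDiff.contDiffOn)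
    exact fun z hz => hz
  -- differentiability facts about h on Ω
  have hdh : ∀ x ∈ Ω, DifferentiableAt ℝ h x := fun x hx =>
    (hC2h.differentiableOn (by norm_num)).differentiableAt (hΩ.mem_nhds hx)
  have hdg : ∀ x ∈ Ω, DifferentiableAt ℝ (fderiv ℝ h) x := fun x hx =>
    (((hC2h.fderiv_of_isOpen hΩ (m := 1) (by norm_num)).differentiableOn
      (by norm_num)).differentiableAt (hΩ.mem_nhds hx))
  have hdinner : ∀ (v : ℂ), ∀ x ∈ Ω, DifferentiableAt ℝ (fun x => fderiv ℝ h x (e v)) x :=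
    fun v x hx => (hdg x hx).clm_apply (differentiableAt_const _)
  set eL : ℂ →L[ℝ] EuclideanSpace ℝ (Fin 2) := e.toLinearIsometry.toContinuousLinearMap with heL
  have heLcoe : ∀ z : ℂ, eL z = e z := fun z => rfl
  have heLd : ∀ z : ℂ, HasFDerivAt (⇑e) eL z := fun z => eL.hasFDerivAt
  -- first derivative transfer
  have E1 : ∀ y ∈ U, fderiv ℝ H y = (fderiv ℝ h (e y)).comp eL := by
    intro y hy
    have : HasFDerivAt H ((fderiv ℝ h (e y)).comp eL) y :=
      HasFDerivAt.comp y (hdh (e y) hy).hasFDerivAt (heLd y)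
    exact this.fderiv
  -- second derivative transfer
  have E2 : ∀ (v : ℂ), ∀ z ∈ U, fderiv ℝ (fun y => fderiv ℝ H y v) z v
      = fderiv ℝ (fun x => fderiv ℝ h x (e v)) (e z) (e v) := by
    intro v z hz
    have heq : (fun y => fderiv ℝ H y v) =ᶠ[nhds z] fun y => fderiv ℝ h (e y) (e v) := by
      filter_upwards [hUopen.mem_nhds hz] with y hy
      rw [E1 y hy]
      rfl
    rw [heq.fderiv_eq]
    have hcd : HasFDerivAt (fun y : ℂ => fderiv ℝ h (e y) (e v))
        ((fderiv ℝ (fun x => fderiv ℝ h x (e v)) (e z)).comp eL) z :=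
      HasFDerivAt.comp z (hdinner v (e z) hz).hasFDerivAt (heLd z)
    rw [hcd.fderiv]
    rfl
  -- Laplace equation transfer
  have hlap : ∀ z ∈ U, fderiv ℝ (fun y => fderiv ℝ H y 1) z 1
      + fderiv ℝ (fun y => fderiv ℝ H y I) z I = 0 := by
    intro z hz
    rw [E2 1 z hz, E2 I z hz, he1, heI]
    have := hlaph (e z) hz
    rw [laplacian, Fin.sum_univ_two] at this
    exact this
  -- positivity transfer
  have hposH : ∀ z ∈ U, 0 < H z := fun z hz => hpos (e z) hz
  -- apply the complex Harnack inequality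
  set c : ℂ := e.symm p with hc
  set w : ℂ := e.symm q with hw
  have hec : e c = p := e.apply_symm_apply p
  have hew : e w = q := e.apply_symm_apply q
  have hballU : ball c r ⊆ U := by
    intro z hz
    show e z ∈ Ω
    apply hball
    rw [mem_ball] at hz ⊢
    rw [← hec, e.dist_map]
    exact hz
  have hwball : w ∈ ball c r := by
    rw [mem_ball, ← e.dist_map, hec, hew]
    exact mem_ball.1 hq
  have key := harnack_complex hUopen hC2
    (fun z hz => conj_grad_differentiable hUopen hC2 hlap hz) hposH hballU hwball
  rw [← e.dist_map, hec, hew] at key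
  have hHw : H w = h q := by rw [hH]; simp [hew]
  have hHc : H c = h p := by rw [hH]; simp [hec]
  rw [hHw, hHc] at key
  -- final algebra
  have hdist : ‖p - q‖ = dist p q := (dist_eq_norm p q).symm
  rw [hdist]
  have hρ : 0 < r - dist p q := by
    have := mem_ball.1 hq
    rw [dist_comm] at this
    linarith
  rw [div_pow, div_mul_eq_mul_div, le_div_iff₀ (by positivity : (0:ℝ) < (r - dist p q) ^ 2)]
  nlinarith [key]
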